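/- For every $m \in (0,1]$, every $\lambda > 0$ and every $t \ge 0$, $e^{-t} \sum_{n=0}^{+\infty} \frac{t^n \lambda^n}{n!} \Big( \sum_{(x_0,\dots,x_n) \in L_n} m^{\Gamma(x_n)} \Big) \le \exp\Big\{ t \Big[ \lambda \Big( N m + \frac{1}{m} \Big) - 1 \Big] \Big\}$; in particular the series on the left converges. -/

import Mathlib

/-- Adjacency on the rooted regular tree `𝕋^N`: vertices are finite sequences with
entries in `Fin N` (the empty list is the root `O`); `x` and `y` are adjacent iff
one is obtained from the other by prepending one letter. -/
def TreeAdj (N : ℕ) (x y : List (Fin N)) : Prop :=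
  (∃ a : Fin N, y = a :: x) ∨ (∃ a : Fin N, x = a :: y)

/-- A walk of length `n` from the root `O`. -/
def IsWalkFromRoot (N n : ℕ) (p : Fin (n + 1) → List (Fin N)) : Prop :=
  p 0 = [] ∧ ∀ j : Fin n, TreeAdj N (p j.castSucc) (p j.succ)

open Classical in
/-- Encode a neighbour of `x` as an element of `Fin N ⊕ Unit`. -/
noncomputable def nbrMap (N : ℕ) (x : List (Fin N)) (y : {y // TreeAdj N x y}) :
    Fin N ⊕ Unit :=
  if h : ∃ a : Fin N, y.1 = a :: x then Sum.inl h.choose else Sum.inr ()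

lemma nbrMap_injective (N : ℕ) (x : List (Fin N)) :
    Function.Injective (nbrMap N x) := by
  intro y y' h
  unfold nbrMap at h
  split_ifs at h with h1 h2 h2
  · ext1
    rw [h1.choose_spec, h2.choose_spec, Sum.inl_injective h]
  · rcases y.2 with h3 | h3
    · exact absurd h3 h1
    rcases y'.2 with h4 | h4
    · exact absurd h4 h2
    obtain ⟨a, ha⟩ := h3
    obtain ⟨b, hb⟩ := h4
    ext1
    have hab : a :: y.1 = b :: y'.1 := by rw [← ha, ← hb]
    exact (List.cons_eq_cons.mp hab).2

instance nbrFinite (N : ℕ) (x : List (Fin N)) :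
    Finite {y // TreeAdj N x y} :=
  Finite.of_injective _ (nbrMap_injective N x)

lemma nbr_sum_le (N : ℕ) (x : List (Fin N)) (m : ℝ) (hm0 : 0 < m) :
    ∑' y : {y // TreeAdj N x y}, m ^ y.1.length
      ≤ m ^ x.length * ((N : ℝ) * m + 1 / m) := by
  classical
  set g : Fin N ⊕ Unit → ℝ :=
    Sum.elim (fun _ => m ^ (x.length + 1)) (fun _ => m ^ x.length / m) with hg
  have hle : ∑' y : {y // TreeAdj N x y}, m ^ y.1.length ≤ ∑' s, g s := by
    apply Summable.tsum_le_tsum_of_inj (nbrMap N x) (nbrMap_injective N x)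
    · intro c _
      rcases c with a | u
      · simp only [hg, Sum.elim_inl]; positivity
      · simp only [hg, Sum.elim_inr]; positivity
    · rintro ⟨y, hy⟩
      unfold nbrMap
      split_ifs with h1
      · show m ^ y.length ≤ g (Sum.inl _)
        have hlen : y.length = x.length + 1 := by
          rw [show y = h1.choose :: x from h1.choose_spec]; simp
        simp only [hg, Sum.elim_inl, hlen, le_refl]
      · show m ^ y.length ≤ g (Sum.inr ())
        rcases hy with h2 | h2
        · exact absurd h2 h1
        obtain ⟨a, ha⟩ := h2
        have hx : x.length = y.length + 1 := by rw [ha]; simp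
        simp only [hg, Sum.elim_inr, hx, pow_succ]
        rw [mul_div_assoc, div_self hm0.ne', mul_one]
    · exact Summable.of_finite
    · exact Summable.of_finite
  have hgsum : ∑' s, g s = m ^ x.length * ((N : ℝ) * m + 1 / m) := by
    rw [tsum_fintype, Fintype.sum_sum_type]
    simp only [hg, Sum.elim_inl, Sum.elim_inr, Finset.sum_const, Finset.card_univ,
      Fintype.card_fin, Fintype.card_unit, nsmul_eq_mul, Nat.cast_one, one_mul]
    rw [pow_succ]
    field_simp
  linarith [hle, hgsum.le]

/-- Walks of length `n+1` correspond to walks of length `n` together with a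
neighbour of the endpoint. -/
def walkEquiv (N n : ℕ) :
    {p : Fin (n + 1 + 1) → List (Fin N) // IsWalkFromRoot N (n + 1) p} ≃
      Σ q : {q : Fin (n + 1) → List (Fin N) // IsWalkFromRoot N n q},
        {y // TreeAdj N (q.1 (Fin.last n)) y} where
  toFun p :=
    ⟨⟨fun j => p.1 j.castSucc, by
        refine ⟨?_, ?_⟩
        · have := p.2.1
          simpa using this
        · intro j
          have := p.2.2 j.castSucc
          rwa [Fin.succ_castSucc] at this⟩,
      ⟨p.1 (Fin.last (n + 1)), by
        have := p.2.2 (Fin.last n)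
        rwa [Fin.succ_last] at this⟩⟩
  invFun s :=
    ⟨Fin.snoc s.1.1 s.2.1, by
      refine ⟨?_, ?_⟩
      · have h0 : (0 : Fin (n + 1 + 1)) = (0 : Fin (n + 1)).castSucc := by simp
        rw [h0, Fin.snoc_castSucc]
        exact s.1.2.1
      · intro j
        induction j using Fin.lastCases with
        | last =>
          rw [Fin.succ_last, Fin.snoc_last, Fin.snoc_castSucc]
          exact s.2.2
        | cast i =>
          rw [Fin.succ_castSucc, Fin.snoc_castSucc, Fin.snoc_castSucc]
          exact s.1.2.2 i⟩
  left_inv p := by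
    apply Subtype.ext
    funext j
    induction j using Fin.lastCases with
    | last => simp
    | cast i => simp
  right_inv s := by
    rcases s with ⟨⟨q, hq⟩, ⟨y, hy⟩⟩
    have hfun : (fun j : Fin (n + 1) =>
        (Fin.snoc q y : Fin (n + 1 + 1) → List (Fin N)) j.castSucc) = q :=
      funext fun j => Fin.snoc_castSucc ..
    refine Sigma.ext (Subtype.ext hfun) ?_
    refine (Subtype.heq_iff_coe_eq ?_).mpr ?_
    · intro z
      show TreeAdj N
        ((Fin.snoc q y : Fin (n + 1 + 1) → List (Fin N)) (Fin.last n).castSucc) z ↔ _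
      rw [Fin.snoc_castSucc]
    · show (Fin.snoc q y : Fin (n + 1 + 1) → List (Fin N)) (Fin.last (n + 1)) = y
      exact Fin.snoc_last ..

instance walkFinite (N : ℕ) : ∀ n : ℕ,
    Finite {p : Fin (n + 1) → List (Fin N) // IsWalkFromRoot N n p}
  | 0 => by
    have : Subsingleton {p : Fin 1 → List (Fin N) // IsWalkFromRoot N 0 p} := by
      constructor
      rintro ⟨p, hp⟩ ⟨q, hq⟩
      apply Subtype.ext
      funext j
      show p j = q j
      have hj : j = 0 := Subsingleton.elim _ _
      rw [hj, hp.1, hq.1]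
    exact Finite.of_subsingleton
  | (n + 1) => by
    haveI := walkFinite N n
    exact Finite.of_equiv _ (walkEquiv N n).symm

noncomputable instance walkUnique (N : ℕ) :
    Unique {p : Fin 1 → List (Fin N) // IsWalkFromRoot N 0 p} where
  default := ⟨fun _ => [], ⟨rfl, fun j => j.elim0⟩⟩
  uniq := by
    rintro ⟨p, hp⟩
    apply Subtype.ext
    funext j
    show p j = []
    have hj : j = 0 := Subsingleton.elim _ _
    rw [hj, hp.1]

lemma walk_tsum_le (N : ℕ) (m : ℝ) (hm0 : 0 < m) : ∀ n : ℕ,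
    ∑' p : {p : Fin (n + 1) → List (Fin N) // IsWalkFromRoot N n p},
      m ^ (p.1 (Fin.last n)).length ≤ ((N : ℝ) * m + 1 / m) ^ n
  | 0 => by
    rw [tsum_eq_single (default : {p : Fin 1 → List (Fin N) // IsWalkFromRoot N 0 p})
      (fun b hb => absurd (Subsingleton.elim b default) hb)]
    show m ^ (List.length ([] : List (Fin N))) ≤ _
    norm_num
  | (n + 1) => by
    set C : ℝ := (N : ℝ) * m + 1 / m with hC
    have hCpos : 0 < C := by
      have : 0 < 1 / m := by positivity
      have : (0:ℝ) ≤ (N : ℝ) * m := by positivity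
      simp only [hC]; linarith
    have key : ∑' p : {p : Fin (n + 1 + 1) → List (Fin N) // IsWalkFromRoot N (n+1) p},
        m ^ (p.1 (Fin.last (n+1))).length
        = ∑' s : Σ q : {q : Fin (n + 1) → List (Fin N) // IsWalkFromRoot N n q},
            {y // TreeAdj N (q.1 (Fin.last n)) y}, m ^ s.2.1.length :=
      Equiv.tsum_eq (walkEquiv N n) (fun s => m ^ s.2.1.length) ▸ rfl
    rw [key, Summable.tsum_sigma' (fun b => Summable.of_finite) Summable.of_finite]
    calc ∑' q : {q : Fin (n + 1) → List (Fin N) // IsWalkFromRoot N n q},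
          ∑' y : {y // TreeAdj N (q.1 (Fin.last n)) y}, m ^ y.1.length
        ≤ ∑' q : {q : Fin (n + 1) → List (Fin N) // IsWalkFromRoot N n q},
          m ^ (q.1 (Fin.last n)).length * C := by
          apply Summable.tsum_le_tsum _ Summable.of_finite Summable.of_finite
          intro q
          exact nbr_sum_le N (q.1 (Fin.last n)) m hm0
      _ = (∑' q : {q : Fin (n + 1) → List (Fin N) // IsWalkFromRoot N n q},
          m ^ (q.1 (Fin.last n)).length) * C := tsum_mul_right
      _ ≤ C ^ n * C :=
          mul_le_mul_of_nonneg_right (walk_tsum_le N m hm0 n) hCpos.le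
      _ = C ^ (n + 1) := (pow_succ C n).symm

lemma walk_tsum_nonneg (N n : ℕ) (m : ℝ) (hm0 : 0 < m) :
    0 ≤ ∑' p : {p : Fin (n + 1) → List (Fin N) // IsWalkFromRoot N n p},
      m ^ (p.1 (Fin.last n)).length :=
  tsum_nonneg (fun p => by positivity)

/-- For every `m ∈ (0,1]`, `λ > 0` and `t ≥ 0`,
`e^{-t} ∑_{n≥0} (t^n λ^n / n!) ( ∑_{(x_0,…,x_n) ∈ L_n} m^{Γ(x_n)} )
  ≤ exp{ t [ λ (N m + 1/m) - 1 ] }`;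
in particular the series on the left (and each inner sum) converges. -/
theorem exponential_bound_series (N : ℕ) (hN : 1 ≤ N)
    (m : ℝ) (hm0 : 0 < m) (hm1 : m ≤ 1) (lam : ℝ) (hlam : 0 < lam) (t : ℝ) (ht : 0 ≤ t) :
    (∀ n : ℕ, Summable (fun p : {p : Fin (n + 1) → List (Fin N) // IsWalkFromRoot N n p} =>
      m ^ (p.1 (Fin.last n)).length)) ∧
    Summable (fun n : ℕ => t ^ n * lam ^ n / (n.factorial : ℝ) *
      ∑' p : {p : Fin (n + 1) → List (Fin N) // IsWalkFromRoot N n p},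
        m ^ (p.1 (Fin.last n)).length) ∧
    Real.exp (-t) * ∑' n : ℕ, t ^ n * lam ^ n / (n.factorial : ℝ) *
        ∑' p : {p : Fin (n + 1) → List (Fin N) // IsWalkFromRoot N n p},
          m ^ (p.1 (Fin.last n)).length
      ≤ Real.exp (t * (lam * ((N : ℝ) * m + 1 / m) - 1)) := by
  set C : ℝ := (N : ℝ) * m + 1 / m with hC
  have hCpos : 0 < C := by
    have h1 : 0 < 1 / m := by positivity
    have h2 : (0:ℝ) ≤ (N : ℝ) * m := by positivity
    simp only [hC]; linarith
  set f : ℕ → ℝ := fun n => t ^ n * lam ^ n / (n.factorial : ℝ) *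
      ∑' p : {p : Fin (n + 1) → List (Fin N) // IsWalkFromRoot N n p},
        m ^ (p.1 (Fin.last n)).length with hf
  have hf_nonneg : ∀ n, 0 ≤ f n := by
    intro n
    apply mul_nonneg
    · positivity
    · exact walk_tsum_nonneg N n m hm0
  have hf_le : ∀ n, f n ≤ (t * lam * C) ^ n / (n.factorial : ℝ) := by
    intro n
    have h1 : f n ≤ t ^ n * lam ^ n / (n.factorial : ℝ) * C ^ n := by
      apply mul_le_mul_of_nonneg_left (walk_tsum_le N m hm0 n)
      positivity
    calc f n ≤ t ^ n * lam ^ n / (n.factorial : ℝ) * C ^ n := h1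
      _ = (t * lam * C) ^ n / (n.factorial : ℝ) := by
          rw [mul_pow, mul_pow]; ring
  have hg_sum : Summable (fun n : ℕ => (t * lam * C) ^ n / (n.factorial : ℝ)) :=
    Real.summable_pow_div_factorial (t * lam * C)
  have hf_sum : Summable f := Summable.of_nonneg_of_le hf_nonneg hf_le hg_sum
  refine ⟨fun n => Summable.of_finite, hf_sum, ?_⟩
  have hsum_le : ∑' n, f n ≤ ∑' n, (t * lam * C) ^ n / (n.factorial : ℝ) :=
    Summable.tsum_le_tsum hf_le hf_sum hg_sum
  have hexp : ∑' n : ℕ, (t * lam * C) ^ n / (n.factorial : ℝ) = Real.exp (t * lam * C) := by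
    rw [Real.exp_eq_exp_ℝ, NormedSpace.exp_eq_tsum_div]
  have : Real.exp (-t) * ∑' n, f n ≤ Real.exp (-t) * Real.exp (t * lam * C) := by
    apply mul_le_mul_of_nonneg_left _ (Real.exp_pos _).le
    rw [← hexp]; exact hsum_le
  calc Real.exp (-t) * ∑' n, f n ≤ Real.exp (-t) * Real.exp (t * lam * C) := this
    _ = Real.exp (t * (lam * C - 1)) := by
        rw [← Real.exp_add]; ring_nf
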